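/- Let ρ be a positive definite density operator and H_1,…,H_d Hermitian operators on a finite-dimensional Hilbert space, m ∈ ℝ^d, and suppose λ' ∈ ℝ^d is such that the quantum Esscher transform σ_{λ'} = e^{λ'·H+log ρ}/tr(e^{λ'·H+log ρ}) satisfies tr(σ_{λ'} H_i) = m_i for all i. Then for every density operator σ with tr(σ H_i) = m_i for all i, S(σ‖ρ) ≥ S(σ_{λ'}‖ρ). -/

import Mathlib

open scoped ComplexOrder

/-- Matrix logarithm of a Hermitian matrix via spectral functional calculus. -/
noncomputable def matLog {n : Type*} [Fintype n] [DecidableEq n]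
    (A : Matrix n n ℂ) : Matrix n n ℂ :=
  if h : A.IsHermitian then h.cfc Real.log else 0

/-- Matrix exponential of a Hermitian matrix via spectral functional calculus. -/
noncomputable def matExp {n : Type*} [Fintype n] [DecidableEq n]
    (A : Matrix n n ℂ) : Matrix n n ℂ :=
  if h : A.IsHermitian then h.cfc Real.exp else 0

/-- Quantum relative entropy `S(σ‖ρ) = tr(σ(log σ − log ρ))` (real part of the trace). -/
noncomputable def qRelEnt {n : Type*} [Fintype n] [DecidableEq n]
    (σ ρ : Matrix n n ℂ) : ℝ :=
  ((σ * (matLog σ - matLog ρ)).trace).re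

section Helpers

open Matrix Complex

variable {n : Type*} [Fintype n] [DecidableEq n]

private lemma specContOn (A : Matrix n n ℂ) (f : ℝ → ℝ) : ContinuousOn f (spectrum ℝ A) :=
  (Matrix.finite_real_spectrum (A := A)).continuousOn f

private lemma matLog_herm {A : Matrix n n ℂ} (hA : A.IsHermitian) :
    matLog A = cfc Real.log A := by
  rw [matLog, dif_pos hA, hA.cfc_eq]

private lemma herm_cfc (A : Matrix n n ℂ) (f : ℝ → ℝ) : (cfc f A).IsHermitian :=
  cfc_predicate f A

private lemma cfc_eq_self {A : Matrix n n ℂ} (hA : A.IsHermitian) : hA.cfc id = A := by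
  rw [← hA.cfc_eq, cfc_id ℝ A hA.isSelfAdjoint]

private lemma trace_hcfc {A : Matrix n n ℂ} (hA : A.IsHermitian) (f : ℝ → ℝ) :
    (hA.cfc f).trace = ((∑ i, f (hA.eigenvalues i) : ℝ) : ℂ) := by
  rw [Matrix.IsHermitian.cfc, Unitary.conjStarAlgAut_apply, Matrix.trace_mul_cycle]
  rw [Unitary.coe_star_mul_self, Matrix.one_mul, Matrix.trace_diagonal]
  push_cast
  rfl

private lemma trace_cfc_mul_cfc {σ τ : Matrix n n ℂ} (hσ : σ.IsHermitian) (hτ : τ.IsHermitian)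
    (f g : ℝ → ℝ) :
    ((hσ.cfc f * hτ.cfc g).trace).re
      = ∑ i, ∑ j, f (hσ.eigenvalues i) * g (hτ.eigenvalues j) *
          Complex.normSq ((star (hσ.eigenvectorUnitary : Matrix n n ℂ) *
            (hτ.eigenvectorUnitary : Matrix n n ℂ)) i j) := by
  set U : Matrix n n ℂ := (hσ.eigenvectorUnitary : Matrix n n ℂ) with hU
  set V : Matrix n n ℂ := (hτ.eigenvectorUnitary : Matrix n n ℂ) with hV
  set W : Matrix n n ℂ := star U * V with hW
  set d : n → ℂ := RCLike.ofReal ∘ f ∘ hσ.eigenvalues with hd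
  set e : n → ℂ := RCLike.ofReal ∘ g ∘ hτ.eigenvalues with he
  have hVU : star V * U = star W := by rw [hW, StarMul.star_mul, star_star]
  have hprod : hσ.cfc f * hτ.cfc g = U * (diagonal d * W * diagonal e) * star V := by
    rw [Matrix.IsHermitian.cfc, Matrix.IsHermitian.cfc, Unitary.conjStarAlgAut_apply,
      Unitary.conjStarAlgAut_apply, ← hU, ← hV, ← hd, ← he, hW]
    noncomm_ring
  have htr : (hσ.cfc f * hτ.cfc g).trace
      = (diagonal d * W * diagonal e * star W).trace := by
    rw [hprod, Matrix.trace_mul_cycle, hVU, Matrix.trace_mul_comm]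
  rw [htr, Matrix.trace, Complex.re_sum]
  refine Finset.sum_congr rfl fun i _ => ?_
  have hentry : (diagonal d * W * diagonal e * star W) i i
      = ∑ j, d i * W i j * e j * star (W i j) := by
    rw [Matrix.mul_apply]
    refine Finset.sum_congr rfl fun j _ => ?_
    rw [Matrix.star_apply, Matrix.mul_diagonal, Matrix.diagonal_mul]
  rw [Matrix.diag_apply, hentry, Complex.re_sum]
  refine Finset.sum_congr rfl fun j _ => ?_
  have hterm : d i * W i j * e j * star (W i j)
      = ((f (hσ.eigenvalues i) * g (hτ.eigenvalues j) * normSq (W i j) : ℝ) : ℂ) := by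
    show ((f (hσ.eigenvalues i) : ℝ) : ℂ) * W i j * ((g (hτ.eigenvalues j) : ℝ) : ℂ)
        * star (W i j) = _
    rw [RCLike.star_def]
    push_cast
    linear_combination (f (hσ.eigenvalues i) : ℂ) * (g (hτ.eigenvalues j) : ℂ)
      * Complex.mul_conj (W i j)
  rw [hterm, Complex.ofReal_re]

private lemma key_ineq {a b : ℝ} (ha : 0 ≤ a) (hb : 0 < b) :
    a - b ≤ a * Real.log a - a * Real.log b := by
  rcases eq_or_lt_of_le ha with h | h
  · simp only [← h, zero_mul, sub_zero, zero_sub, sub_self, neg_nonpos]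
    linarith
  · have hlog := Real.log_le_sub_one_of_pos (show 0 < b / a by positivity)
    rw [Real.log_div (ne_of_gt hb) (ne_of_gt h)] at hlog
    have hba : b / a * a = b := div_mul_cancel₀ b (ne_of_gt h)
    nlinarith [h]

/-- Klein's inequality: nonnegativity of the quantum relative entropy. -/
private lemma klein {σ τ : Matrix n n ℂ} (hσ : σ.PosSemidef) (hσ1 : σ.trace = 1)
    (hτ : τ.IsHermitian) (hq : ∀ i, 0 < hτ.eigenvalues i) (hτ1 : τ.trace = 1) :
    0 ≤ ((σ * (matLog σ - matLog τ)).trace).re := by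
  have hσh := hσ.1
  set p : n → ℝ := hσh.eigenvalues with hp'
  set q : n → ℝ := hτ.eigenvalues with hq'
  have hp : ∀ i, 0 ≤ p i := hσ.eigenvalues_nonneg
  set U : Matrix n n ℂ := (hσh.eigenvectorUnitary : Matrix n n ℂ) with hU
  set V : Matrix n n ℂ := (hτ.eigenvectorUnitary : Matrix n n ℂ) with hV
  set W : Matrix n n ℂ := star U * V with hW
  set c : n → n → ℝ := fun i j => normSq (W i j) with hc
  have hWmem : W ∈ unitary (Matrix n n ℂ) :=
    mul_mem (Unitary.star_mem (SetLike.coe_mem _)) (SetLike.coe_mem _)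
  have hcnn : ∀ i j, 0 ≤ c i j := fun i j => normSq_nonneg _
  have hrow : ∀ i, ∑ j, c i j = 1 := by
    intro i
    have h1 : (W * star W) i i = 1 := by
      rw [Unitary.mul_star_self_of_mem hWmem]; simp [Matrix.one_apply]
    have h2 : (W * star W) i i = ((∑ j, c i j : ℝ) : ℂ) := by
      rw [Matrix.mul_apply]
      push_cast
      refine Finset.sum_congr rfl fun j _ => ?_
      rw [Matrix.star_apply, RCLike.star_def, Complex.mul_conj]
    rw [h2] at h1
    exact_mod_cast h1
  have hcol : ∀ j, ∑ i, c i j = 1 := by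
    intro j
    have h1 : (star W * W) j j = 1 := by
      rw [Unitary.star_mul_self_of_mem hWmem]; simp [Matrix.one_apply]
    have h2 : (star W * W) j j = ((∑ i, c i j : ℝ) : ℂ) := by
      rw [Matrix.mul_apply]
      push_cast
      refine Finset.sum_congr rfl fun i _ => ?_
      rw [Matrix.star_apply, RCLike.star_def, mul_comm, Complex.mul_conj]
    rw [h2] at h1
    exact_mod_cast h1
  have hsum_p : ∑ i, p i = 1 := by
    have := trace_hcfc hσh id
    rw [cfc_eq_self hσh, hσ1] at this
    exact_mod_cast this.symm
  have hsum_q : ∑ i, q i = 1 := by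
    have := trace_hcfc hτ id
    rw [cfc_eq_self hτ, hτ1] at this
    exact_mod_cast this.symm
  have hlogσ : matLog σ = hσh.cfc Real.log := dif_pos hσh
  have hlogτ : matLog τ = hτ.cfc Real.log := dif_pos hτ
  have hre : ((σ * (matLog σ - matLog τ)).trace).re
      = (∑ i, p i * Real.log (p i)) - ∑ i, ∑ j, p i * Real.log (q j) * c i j := by
    rw [hlogσ, hlogτ, mul_sub, Matrix.trace_sub, Complex.sub_re]
    congr 1
    · nth_rewrite 1 [← cfc_eq_self hσh]
      rw [trace_cfc_mul_cfc hσh hσh id Real.log]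
      rw [← hU, Unitary.coe_star_mul_self]
      refine Finset.sum_congr rfl fun i _ => ?_
      rw [Finset.sum_eq_single i]
      · simp [Matrix.one_apply, hp']
      · intro j _ hj
        simp [Matrix.one_apply_ne' hj]
      · intro h; exact absurd (Finset.mem_univ i) h
    · nth_rewrite 1 [← cfc_eq_self hσh]
      rw [trace_cfc_mul_cfc hσh hτ id Real.log]
      rfl
  rw [hre]
  have main : ∑ i, ∑ j, c i j * (p i - q j)
      ≤ ∑ i, ∑ j, c i j * (p i * Real.log (p i) - p i * Real.log (q j)) :=
    Finset.sum_le_sum fun i _ => Finset.sum_le_sum fun j _ =>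
      mul_le_mul_of_nonneg_left (key_ineq (hp i) (hq j)) (hcnn i j)
  have lhs0 : ∑ i, ∑ j, c i j * (p i - q j) = 0 := by
    have e1 : ∑ i, ∑ j, c i j * (p i - q j)
        = (∑ i, ∑ j, c i j * p i) - ∑ i, ∑ j, c i j * q j := by
      simp_rw [mul_sub, Finset.sum_sub_distrib]
    have e2 : ∑ i, ∑ j, c i j * p i = 1 := by
      have h : ∀ i, ∑ j, c i j * p i = p i := by
        intro i; rw [← Finset.sum_mul, hrow, one_mul]
      simp_rw [h]; exact hsum_p
    have e3 : ∑ i, ∑ j, c i j * q j = 1 := by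
      rw [Finset.sum_comm]
      have h : ∀ j, ∑ i, c i j * q j = q j := by
        intro j; rw [← Finset.sum_mul, hcol, one_mul]
      simp_rw [h]; exact hsum_q
    rw [e1, e2, e3, sub_self]
  have rhs_eq : ∑ i, ∑ j, c i j * (p i * Real.log (p i) - p i * Real.log (q j))
      = (∑ i, p i * Real.log (p i)) - ∑ i, ∑ j, p i * Real.log (q j) * c i j := by
    have e1 : ∀ i, ∑ j, c i j * (p i * Real.log (p i) - p i * Real.log (q j))
        = p i * Real.log (p i) - ∑ j, p i * Real.log (q j) * c i j := by
      intro i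
      simp_rw [mul_sub, Finset.sum_sub_distrib]
      congr 1
      · rw [← Finset.sum_mul, hrow, one_mul]
      · exact Finset.sum_congr rfl fun j _ => by ring
    simp_rw [e1, Finset.sum_sub_distrib]
  linarith [lhs0 ▸ rhs_eq ▸ main]

end Helpers

/-- The quantum Esscher transform minimizes quantum relative entropy to ρ among all
density operators satisfying the expectation constraints `tr(σ H_i) = m_i`. -/
theorem qEsscher_minimizes_qRelEnt
    {n : Type*} [Fintype n] [DecidableEq n] {d : ℕ}
    (ρ σ : Matrix n n ℂ) (H : Fin d → Matrix n n ℂ) (m lam' : Fin d → ℝ)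
    (hρ : ρ.PosDef) (hρtr : ρ.trace = 1)
    (hH : ∀ i, (H i).IsHermitian)
    (hmE : ∀ i,
      (((matExp (∑ j, lam' j • H j + matLog ρ)).trace⁻¹ •
          matExp (∑ j, lam' j • H j + matLog ρ)) * H i).trace = (m i : ℂ))
    (hσ : σ.PosSemidef) (hσtr : σ.trace = 1)
    (hm : ∀ i, (σ * H i).trace = (m i : ℂ)) :
    qRelEnt σ ρ ≥
      qRelEnt ((matExp (∑ j, lam' j • H j + matLog ρ)).trace⁻¹ •
        matExp (∑ j, lam' j • H j + matLog ρ)) ρ := by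
  open Matrix Complex in
  rcases isEmpty_or_nonempty n with hn | hn
  · exact absurd hσtr (by simp [Matrix.trace])
  set S : Matrix n n ℂ := ∑ j, lam' j • H j with hS
  have hSh : S.IsHermitian := by
    show Sᴴ = S
    rw [hS, Matrix.conjTranspose_sum]
    exact Finset.sum_congr rfl fun j _ => by
      rw [Matrix.conjTranspose_smul, star_trivial, hH j]
  have hlogρh : (matLog ρ).IsHermitian := by
    rw [matLog_herm hρ.1]; exact herm_cfc ρ Real.log
  set A : Matrix n n ℂ := S + matLog ρ with hAdef
  have hA : A.IsHermitian := hSh.add hlogρh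
  have hexp : matExp A = cfc Real.exp A := by rw [matExp, dif_pos hA, hA.cfc_eq]
  set r : ℝ := ∑ i, Real.exp (hA.eigenvalues i) with hr
  have hrpos : 0 < r := Finset.sum_pos (fun i _ => Real.exp_pos _) Finset.univ_nonempty
  have htrE : (matExp A).trace = (r : ℂ) := by
    rw [matExp, dif_pos hA]; exact trace_hcfc hA Real.exp
  set g : ℝ → ℝ := fun x => r⁻¹ * Real.exp x with hg
  set τ : Matrix n n ℂ := (matExp A).trace⁻¹ • matExp A with hτdef
  have hτ_eq : τ = cfc g A := by
    rw [hτdef, htrE, hexp, ← Complex.ofReal_inv]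
    have hsm : ((r⁻¹ : ℝ) : ℂ) • cfc Real.exp A = (r⁻¹ : ℝ) • cfc Real.exp A := by
      ext i j
      simp [Matrix.smul_apply, Complex.real_smul]
    rw [hsm, ← cfc_smul r⁻¹ Real.exp A (specContOn A _)]
    have hfg : (fun x => r⁻¹ • Real.exp x) = g := by
      funext x; rw [smul_eq_mul]
    rw [hfg]
  have hτh : τ.IsHermitian := hτ_eq ▸ herm_cfc A g
  have hτtr : τ.trace = 1 := by
    rw [hτdef, Matrix.trace_smul, htrE, smul_eq_mul, inv_mul_cancel₀]
    exact_mod_cast ne_of_gt hrpos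
  have hτeig : ∀ i, 0 < hτh.eigenvalues i := by
    intro i
    have hmem := hτh.eigenvalues_mem_spectrum_real i
    have hspec : spectrum ℝ τ = g '' spectrum ℝ A := by
      rw [hτ_eq]
      exact cfc_map_spectrum g A hA.isSelfAdjoint (specContOn A g)
    rw [hspec] at hmem
    obtain ⟨x, -, hx⟩ := hmem
    rw [← hx]
    exact mul_pos (inv_pos.mpr hrpos) (Real.exp_pos x)
  have hlogτ : matLog τ = A - (Real.log r) • (1 : Matrix n n ℂ) := by
    rw [matLog_herm hτh, hτ_eq]
    rw [← cfc_comp Real.log g A hA.isSelfAdjoint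
      ((Set.Finite.image g (Matrix.finite_real_spectrum (A := A))).continuousOn Real.log)
      (specContOn A g)]
    have hfun : Real.log ∘ g = fun x => x - Real.log r := by
      funext x
      simp only [Function.comp_apply, hg]
      rw [Real.log_mul (inv_ne_zero (ne_of_gt hrpos)) (Real.exp_ne_zero x),
        Real.log_inv, Real.log_exp]
      ring
    rw [hfun]
    rw [cfc_sub (fun x => x) (fun _ => Real.log r) A (specContOn A _) (specContOn A _)]
    rw [cfc_id' ℝ A hA.isSelfAdjoint, cfc_const (Real.log r) A hA.isSelfAdjoint]
    rw [Algebra.algebraMap_eq_smul_one]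
  have hdiff : matLog τ - matLog ρ = S - (Real.log r) • (1 : Matrix n n ℂ) := by
    rw [hlogτ, hAdef]; abel
  have htr_all : ∀ (X : Matrix n n ℂ), X.trace = 1 → (∀ i, (X * H i).trace = (m i : ℂ)) →
      (X * (matLog τ - matLog ρ)).trace
        = (∑ j, lam' j • (m j : ℂ)) - (Real.log r : ℂ) := by
    intro X hX1 hXm
    rw [hdiff, Matrix.mul_sub, Matrix.trace_sub, hS, Matrix.mul_sum]
    simp_rw [Matrix.mul_smul, Matrix.trace_sum, Matrix.trace_smul]
    congr 1
    · exact Finset.sum_congr rfl fun j _ => by rw [hXm j]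
    · rw [Matrix.mul_one, hX1]
      simp [Complex.real_smul]
  have hτm : ∀ i, (τ * H i).trace = (m i : ℂ) := fun i => hmE i
  have hkey : (σ * (matLog τ - matLog ρ)).trace = (τ * (matLog τ - matLog ρ)).trace := by
    rw [htr_all σ hσtr hm, htr_all τ hτtr hτm]
  have hsplit : qRelEnt σ ρ - qRelEnt τ ρ = ((σ * (matLog σ - matLog τ)).trace).re := by
    simp only [qRelEnt]
    rw [← hkey, ← Complex.sub_re, ← Matrix.trace_sub, ← Matrix.mul_sub,
      sub_sub_sub_cancel_right]
  have hklein := klein hσ hσtr hτh hτeig hτtr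
  rw [ge_iff_le, ← sub_nonneg, hsplit]
  exact hklein
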